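/- Let G be a finite group of order n such that every nontrivial complex representation of G has dimension at least k. Let A₁, A₂, A₃, A₁₂, A₁₃, A₂₃ and A₁₂₃ be subsets of G of sizes p₁n, p₂n, p₃n, p₁₂n, p₁₃n, p₂₃n and p₁₂₃n respectively. Then, provided that each of the products p₁p₂p₁₂, p₁p₃p₁₃, p₁p₂₃p₁₂₃ and p₂p₃p₂₃p₁₂p₁₃p₁₂₃ is at least 16/k, there exist elements x₁ ∈ A₁, x₂ ∈ A₂ and x₃ ∈ A₃ such that x₁x₂ ∈ A₁₂, x₃x₁ ∈ A₁₃, x₂x₃⁻¹ ∈ A₂₃ and x₂x₃⁻¹x₁⁻¹ ∈ A₁₂₃. -/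

import Mathlib

open Finset

namespace GowersAux
variable {G : Type} [Group G] [Fintype G] [DecidableEq G]

-- ===== from core.lean =====

variable {G : Type} [Group G] [Fintype G] [DecidableEq G]

/-- convolution operator with kernel 1_A(x y⁻¹) -/
noncomputable def convT (A : Finset G) : EuclideanSpace ℂ G →ₗ[ℂ] EuclideanSpace ℂ G where
  toFun f := WithLp.toLp 2 (fun x => ∑ y, (if x * y⁻¹ ∈ A then f y else 0))
  map_add' f g := by
    ext x
    show (∑ y, if x * y⁻¹ ∈ A then (f y + g y) else 0)
        = (∑ y, if x * y⁻¹ ∈ A then f y else 0) + (∑ y, if x * y⁻¹ ∈ A then g y else 0)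
    rw [← Finset.sum_add_distrib]
    exact Finset.sum_congr rfl fun y _ => by split <;> simp
  map_smul' c f := by
    ext x
    show (∑ y, if x * y⁻¹ ∈ A then (c * f y) else 0) = c * ∑ y, (if x * y⁻¹ ∈ A then f y else 0)
    rw [Finset.mul_sum]
    exact Finset.sum_congr rfl fun y _ => by split <;> simp

/-- adjoint of convT -/
noncomputable def convS (A : Finset G) : EuclideanSpace ℂ G →ₗ[ℂ] EuclideanSpace ℂ G where
  toFun f := WithLp.toLp 2 (fun x => ∑ y, (if y * x⁻¹ ∈ A then f y else 0))
  map_add' f g := by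
    ext x
    show (∑ y, if y * x⁻¹ ∈ A then (f y + g y) else 0)
        = (∑ y, if y * x⁻¹ ∈ A then f y else 0) + (∑ y, if y * x⁻¹ ∈ A then g y else 0)
    rw [← Finset.sum_add_distrib]
    exact Finset.sum_congr rfl fun y _ => by split <;> simp
  map_smul' c f := by
    ext x
    show (∑ y, if y * x⁻¹ ∈ A then (c * f y) else 0) = c * ∑ y, (if y * x⁻¹ ∈ A then f y else 0)
    rw [Finset.mul_sum]
    exact Finset.sum_congr rfl fun y _ => by split <;> simp

lemma convT_apply (A : Finset G) (f : EuclideanSpace ℂ G) (x : G) :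
    convT A f x = ∑ y, (if x * y⁻¹ ∈ A then f y else 0) := rfl

lemma convS_apply (A : Finset G) (f : EuclideanSpace ℂ G) (x : G) :
    convS A f x = ∑ y, (if y * x⁻¹ ∈ A then f y else 0) := rfl

lemma inner_convT (A : Finset G) (f g : EuclideanSpace ℂ G) :
    inner ℂ (convT A f) g = (inner ℂ f (convS A g) : ℂ) := by
  simp only [PiLp.inner_apply, RCLike.inner_apply', convT_apply, convS_apply]
  simp only [map_sum, Finset.sum_mul, Finset.mul_sum]
  rw [Finset.sum_comm]
  refine Finset.sum_congr rfl fun y _ => Finset.sum_congr rfl fun x _ => ?_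
  rw [apply_ite (starRingEnd ℂ)]
  split <;> simp [mul_comm]

/-- projection onto mean-zero functions -/
noncomputable def projP : EuclideanSpace ℂ G →ₗ[ℂ] EuclideanSpace ℂ G where
  toFun f := WithLp.toLp 2 (fun x => f x - (∑ y, f y) / (Fintype.card G))
  map_add' f g := by
    ext x
    show (f x + g x) - (∑ y, (f y + g y)) / (Fintype.card G)
        = (f x - (∑ y, f y) / (Fintype.card G)) + (g x - (∑ y, g y) / (Fintype.card G))
    rw [Finset.sum_add_distrib]
    ring
  map_smul' c f := by
    ext x
    show (c * f x) - (∑ y, (c * f y)) / (Fintype.card G)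
        = c * (f x - (∑ y, f y) / (Fintype.card G))
    rw [← Finset.mul_sum]
    ring

lemma projP_apply (f : EuclideanSpace ℂ G) (x : G) :
    projP f x = f x - (∑ y, f y) / (Fintype.card G) := rfl

lemma sum_projP (f : EuclideanSpace ℂ G) : ∑ x, projP f x = 0 := by
  simp only [projP_apply, Finset.sum_sub_distrib, Finset.sum_const, Finset.card_univ,
    nsmul_eq_mul]
  have : (Fintype.card G : ℂ) ≠ 0 := Nat.cast_ne_zero.2 Fintype.card_ne_zero
  field_simp
  ring

lemma projP_of_sum_zero (f : EuclideanSpace ℂ G) (hf : ∑ x, f x = 0) : projP f = f := by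
  ext x; simp [projP_apply, hf]

lemma inner_projP (f g : EuclideanSpace ℂ G) :
    inner ℂ (projP f) g = (inner ℂ f (projP g) : ℂ) := by
  simp only [PiLp.inner_apply, RCLike.inner_apply', projP_apply, map_sub, map_sum, map_div₀,
    map_natCast]
  simp only [sub_mul, mul_sub, Finset.sum_sub_distrib]
  congr 1
  rw [← Finset.mul_sum, ← Finset.sum_mul]
  ring


-- ===== from part2.lean =====

variable {G : Type} [Group G] [Fintype G] [DecidableEq G]

noncomputable def rtrans (g : G) : EuclideanSpace ℂ G →ₗ[ℂ] EuclideanSpace ℂ G where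
  toFun f := WithLp.toLp 2 (fun x => f (x * g))
  map_add' f h := rfl
  map_smul' c f := rfl

lemma rtrans_apply (g : G) (f : EuclideanSpace ℂ G) (x : G) : rtrans g f x = f (x * g) := rfl

lemma rtrans_convT (A : Finset G) (g : G) (f : EuclideanSpace ℂ G) :
    rtrans g (convT A f) = convT A (rtrans g f) := by
  ext x
  rw [rtrans_apply, convT_apply, convT_apply]
  refine Fintype.sum_equiv (Equiv.mulRight g⁻¹) _ _ fun y => ?_
  simp only [Equiv.coe_mulRight, rtrans_apply, mul_inv_rev, inv_inv, inv_mul_cancel_right,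
    mul_assoc]
  rw [inv_mul_cancel, mul_one]

lemma rtrans_convS (A : Finset G) (g : G) (f : EuclideanSpace ℂ G) :
    rtrans g (convS A f) = convS A (rtrans g f) := by
  ext x
  rw [rtrans_apply, convS_apply, convS_apply]
  refine Fintype.sum_equiv (Equiv.mulRight g⁻¹) _ _ fun y => ?_
  simp only [Equiv.coe_mulRight, rtrans_apply, mul_inv_rev, mul_assoc]
  rw [inv_mul_cancel, mul_one]

lemma rtrans_projP (g : G) (f : EuclideanSpace ℂ G) :
    rtrans g (projP f) = projP (rtrans g f) := by
  ext x
  rw [rtrans_apply, projP_apply, projP_apply, rtrans_apply]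
  congr 2
  exact Fintype.sum_equiv (Equiv.mulRight g⁻¹) _ _ fun y => by rw [rtrans_apply, Equiv.coe_mulRight, inv_mul_cancel_right]

/-- the positive semidefinite symmetric operator -/
noncomputable def opN (A : Finset G) : EuclideanSpace ℂ G →ₗ[ℂ] EuclideanSpace ℂ G :=
  projP ∘ₗ (convS A ∘ₗ (convT A ∘ₗ projP))

lemma inner_opN_right (A : Finset G) (f h : EuclideanSpace ℂ G) :
    (inner ℂ f (opN A h) : ℂ) = inner ℂ (convT A (projP f)) (convT A (projP h)) := by
  have e1 : (inner ℂ f (opN A h) : ℂ) = inner ℂ (projP f) (convS A (convT A (projP h))) := by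
    show (inner ℂ f (projP (convS A (convT A (projP h)))) : ℂ) = _
    exact (inner_projP f _).symm
  rw [e1, ← inner_convT]

lemma opN_isSymmetric (A : Finset G) : (opN A).IsSymmetric := by
  intro f h
  have h1 := inner_opN_right A f h
  have h2 := inner_opN_right A h f
  rw [h1, ← inner_conj_symm, h2, inner_conj_symm]

lemma rtrans_opN (A : Finset G) (g : G) (f : EuclideanSpace ℂ G) :
    rtrans g (opN A f) = opN A (rtrans g f) := by
  show rtrans g (projP (convS A (convT A (projP f)))) = projP (convS A (convT A (projP (rtrans g f))))
  rw [rtrans_projP, rtrans_convS, rtrans_convT, rtrans_projP]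

lemma sum_opN (A : Finset G) (f : EuclideanSpace ℂ G) : ∑ x, opN A f x = 0 :=
  sum_projP _


-- ===== from part3.lean =====

variable {G : Type} [Group G] [Fintype G] [DecidableEq G]

lemma norm_sq_eq (f : EuclideanSpace ℂ G) : ‖f‖ ^ 2 = ∑ x, ‖f x‖ ^ 2 := by
  rw [EuclideanSpace.norm_eq, Real.sq_sqrt (by positivity)]

/-- the row vector of the kernel -/
noncomputable def row (A : Finset G) (x : G) : EuclideanSpace ℂ G :=
  WithLp.toLp 2 (fun y => if x * y⁻¹ ∈ A then 1 else 0)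

lemma convT_eq_inner_row (A : Finset G) (f : EuclideanSpace ℂ G) (x : G) :
    convT A f x = inner ℂ (row A x) f := by
  rw [convT_apply, PiLp.inner_apply]
  refine Finset.sum_congr rfl fun y _ => ?_
  simp only [row, RCLike.inner_apply']
  split <;> simp

lemma sum_norm_sq_row (A : Finset G) : ∑ x, ‖row A x‖ ^ 2 = (Fintype.card G) * A.card := by
  have h1 : ∀ x : G, ‖row A x‖ ^ 2 = (A.card : ℝ) := by
    intro x
    rw [norm_sq_eq]
    have : ∀ y : G, ‖row A x y‖ ^ 2 = if x * y⁻¹ ∈ A then (1:ℝ) else 0 := by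
      intro y; simp only [row]; split <;> simp
    rw [Finset.sum_congr rfl fun y _ => this y]
    rw [show (∑ y : G, if x * y⁻¹ ∈ A then (1:ℝ) else 0) = ∑ z : G, if z ∈ A then (1:ℝ) else 0 from
      Fintype.sum_equiv ((Equiv.inv G).trans (Equiv.mulLeft x)) _ _ (fun y => rfl)]
    simp [Finset.sum_ite_mem]
  rw [Finset.sum_congr rfl fun x _ => h1 x]
  simp [mul_comm]

lemma norm_projP_le (f : EuclideanSpace ℂ G) : ‖projP f‖ ≤ ‖f‖ := by
  have hdec : f = projP f + (f - projP f) := by abel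
  have horth : (inner ℂ (projP f) (f - projP f) : ℂ) = 0 := by
    have hconst : ∀ x, (f - projP f) x = (∑ y, f y) / (Fintype.card G) := by
      intro x; simp [projP_apply]
    have : (inner ℂ (projP f) (f - projP f) : ℂ)
        = (starRingEnd ℂ) (∑ x, projP f x) * ((∑ y, f y) / (Fintype.card G)) := by
      rw [PiLp.inner_apply, map_sum, Finset.sum_mul]
      exact Finset.sum_congr rfl fun x _ => by rw [hconst, RCLike.inner_apply']
    rw [this, sum_projP]
    simp
  have hsq : ‖f‖ ^ 2 = ‖projP f‖ ^ 2 + ‖f - projP f‖ ^ 2 := by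
    nth_rewrite 1 [hdec]
    rw [@norm_add_sq ℂ _ _ _ _ (projP f) (f - projP f), horth]
    simp
  nlinarith [norm_nonneg (projP f), norm_nonneg f, sq_nonneg ‖f - projP f‖]

lemma parseval (b : OrthonormalBasis (Fin (Fintype.card G)) ℂ (EuclideanSpace ℂ G))
    (v : EuclideanSpace ℂ G) : ∑ i, ‖(inner ℂ (b i) v : ℂ)‖ ^ 2 = ‖v‖ ^ 2 := by
  have := b.repr.norm_map v
  rw [← this, EuclideanSpace.norm_eq, Real.sq_sqrt (by positivity)]
  exact Finset.sum_congr rfl fun i _ => by rw [b.repr_apply_apply]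

section Eigen
variable (A : Finset G)

noncomputable def eigB : OrthonormalBasis (Fin (Fintype.card G)) ℂ (EuclideanSpace ℂ G) :=
  (opN_isSymmetric A).eigenvectorBasis finrank_euclideanSpace

noncomputable def eigV (i : Fin (Fintype.card G)) : ℝ :=
  (opN_isSymmetric A).eigenvalues finrank_euclideanSpace i

lemma opN_eigB (i : Fin (Fintype.card G)) :
    opN A (eigB A i) = (eigV A i : ℂ) • eigB A i :=
  (opN_isSymmetric A).apply_eigenvectorBasis finrank_euclideanSpace i

lemma eigV_eq_norm_sq (i : Fin (Fintype.card G)) :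
    (eigV A i : ℝ) = ‖convT A (projP (eigB A i))‖ ^ 2 := by
  have h1 : (inner ℂ (eigB A i) (opN A (eigB A i)) : ℂ) = (eigV A i : ℂ) := by
    rw [opN_eigB, inner_smul_right]
    have : (inner ℂ (eigB A i) (eigB A i) : ℂ) = 1 := by
      rw [@inner_self_eq_norm_sq_to_K ℂ, (eigB A).orthonormal.1 i]
      norm_num
    rw [this, mul_one]
  have h2 := inner_opN_right A (eigB A i) (eigB A i)
  rw [h1] at h2
  have h3 : (inner ℂ (convT A (projP (eigB A i))) (convT A (projP (eigB A i))) : ℂ)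
      = (‖convT A (projP (eigB A i))‖ ^ 2 : ℝ) := by
    rw [@inner_self_eq_norm_sq_to_K ℂ]; norm_cast
  rw [h3] at h2
  exact_mod_cast h2

lemma eigV_nonneg (i : Fin (Fintype.card G)) : 0 ≤ eigV A i := by
  rw [eigV_eq_norm_sq]; positivity

lemma sum_eigV_le : ∑ i, eigV A i ≤ (Fintype.card G) * A.card := by
  have key : ∀ i, eigV A i = ∑ x, ‖(inner ℂ (projP (row A x)) (eigB A i) : ℂ)‖ ^ 2 := by
    intro i
    rw [eigV_eq_norm_sq, norm_sq_eq]
    refine Finset.sum_congr rfl fun x _ => ?_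
    rw [convT_eq_inner_row, inner_projP]
  calc ∑ i, eigV A i = ∑ x, ∑ i, ‖(inner ℂ (projP (row A x)) (eigB A i) : ℂ)‖ ^ 2 := by
        rw [Finset.sum_congr rfl fun i _ => key i, Finset.sum_comm]
    _ = ∑ x, ‖projP (row A x)‖ ^ 2 := by
        refine Finset.sum_congr rfl fun x _ => ?_
        rw [← parseval (eigB A) (projP (row A x))]
        refine Finset.sum_congr rfl fun i _ => ?_
        rw [← inner_conj_symm, RCLike.norm_conj]
    _ ≤ ∑ x, ‖row A x‖ ^ 2 := by
        refine Finset.sum_le_sum fun x _ => ?_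
        have := norm_projP_le (row A x)
        nlinarith [norm_nonneg (projP (row A x))]
    _ = (Fintype.card G) * A.card := sum_norm_sq_row A

end Eigen

-- ===== from part4.lean =====

variable {G : Type} [Group G] [Fintype G] [DecidableEq G]

section Rep
variable (A : Finset G) (i : Fin (Fintype.card G))

/-- the eigenspace -/
noncomputable def eigE : Submodule ℂ (EuclideanSpace ℂ G) :=
  Module.End.eigenspace (opN A) ((eigV A i : ℂ))

lemma mem_eigE (v : EuclideanSpace ℂ G) :
    v ∈ eigE A i ↔ opN A v = (eigV A i : ℂ) • v := Module.End.mem_eigenspace_iff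

lemma eigB_mem_eigE : eigB A i ∈ eigE A i := (mem_eigE A i _).2 (opN_eigB A i)

lemma rtrans_mem_eigE (g : G) (v : EuclideanSpace ℂ G) (hv : v ∈ eigE A i) :
    rtrans g v ∈ eigE A i := by
  rw [mem_eigE] at hv ⊢
  rw [← rtrans_opN, hv, map_smul]

/-- the restricted right-translation on the eigenspace -/
noncomputable def rrest (g : G) : eigE A i →ₗ[ℂ] eigE A i :=
  (rtrans g).restrict (fun v hv => rtrans_mem_eigE A i g v hv)

lemma rrest_mul (g h : G) : rrest A i (g * h) = (rrest A i g).comp (rrest A i h) := by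
  refine LinearMap.ext fun v => Subtype.ext ?_
  show rtrans (g * h) (v : EuclideanSpace ℂ G) = rtrans g (rtrans h (v : EuclideanSpace ℂ G))
  ext x
  rw [rtrans_apply, rtrans_apply, rtrans_apply, mul_assoc]

lemma rrest_one : rrest A i (1 : G) = LinearMap.id := by
  refine LinearMap.ext fun v => Subtype.ext ?_
  show rtrans (1 : G) (v : EuclideanSpace ℂ G) = (v : EuclideanSpace ℂ G)
  ext x
  rw [rtrans_apply, mul_one]

noncomputable def repMat : G →* Matrix (Fin (Module.finrank ℂ (eigE A i)))
    (Fin (Module.finrank ℂ (eigE A i))) ℂ where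
  toFun g := LinearMap.toMatrix (Module.finBasis ℂ (eigE A i)) (Module.finBasis ℂ (eigE A i))
    (rrest A i g)
  map_one' := by
    show LinearMap.toMatrix _ _ (rrest A i 1) = 1
    rw [rrest_one, LinearMap.toMatrix_id]
  map_mul' g h := by
    show LinearMap.toMatrix _ _ (rrest A i (g * h)) = _
    rw [rrest_mul, LinearMap.toMatrix_comp _ (Module.finBasis ℂ (eigE A i))]

noncomputable def repGL : G →* Matrix.GeneralLinearGroup
    (Fin (Module.finrank ℂ (eigE A i))) ℂ := (repMat A i).toHomUnits

lemma repGL_nontrivial (hpos : 0 < eigV A i) :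
    ∃ g, repGL A i g ≠ 1 := by
  by_contra hcon
  push_neg at hcon
  -- all restricted maps are the identity
  have hid : ∀ g : G, rrest A i g = LinearMap.id := by
    intro g
    have h1 : LinearMap.toMatrix (Module.finBasis ℂ (eigE A i)) (Module.finBasis ℂ (eigE A i))
        (rrest A i g) = 1 := congrArg Units.val (hcon g)
    have h2 := (LinearMap.toMatrix (Module.finBasis ℂ (eigE A i))
      (Module.finBasis ℂ (eigE A i))).injective
    apply h2
    rw [h1, LinearMap.toMatrix_id]
  -- hence every element of the eigenspace is constant
  have hconst : ∀ v ∈ eigE A i, v = 0 := by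
    intro v hv
    have hcv : ∀ x : G, v x = v 1 := by
      intro x
      have h6 : rrest A i x ⟨v, hv⟩ = ⟨v, hv⟩ := by rw [hid x]; rfl
      have h7 : rtrans x v = v := congrArg Subtype.val h6
      calc v x = rtrans x v 1 := by rw [rtrans_apply, one_mul]
        _ = v 1 := by rw [h7]
    -- sum of v is zero since μ v = opN v has zero sum
    have hsum : ∑ x, v x = 0 := by
      have h5 : (eigV A i : ℂ) * ∑ x, v x = 0 := by
        rw [Finset.mul_sum, ← sum_opN A v]
        refine Finset.sum_congr rfl fun x _ => ?_
        rw [(mem_eigE A i v).1 hv]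
        rfl
      have hμ : (eigV A i : ℂ) ≠ 0 := by
        simp only [ne_eq, Complex.ofReal_eq_zero]
        exact ne_of_gt hpos
      exact (mul_eq_zero.1 h5).resolve_left hμ
    have hv1 : (Fintype.card G : ℂ) * v 1 = 0 := by
      rw [← hsum, Finset.sum_congr rfl fun x _ => hcv x]
      simp [Finset.card_univ, mul_comm]
    have : v 1 = 0 := by
      have hc : (Fintype.card G : ℂ) ≠ 0 := Nat.cast_ne_zero.2 Fintype.card_ne_zero
      exact (mul_eq_zero.1 hv1).resolve_left hc
    ext x
    rw [hcv x, this]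
    rfl
  have hz : eigB A i = 0 := hconst _ (eigB_mem_eigE A i)
  have hnz : eigB A i ≠ 0 := by
    have := (eigB A).toBasis.ne_zero i
    rwa [OrthonormalBasis.coe_toBasis] at this
  exact hnz hz

end Rep

-- ===== from part5.lean =====

variable {G : Type} [Group G] [Fintype G] [DecidableEq G]

section Mult
variable (A : Finset G) (i : Fin (Fintype.card G))

lemma inner_eigB_opN (j : Fin (Fintype.card G)) (v : EuclideanSpace ℂ G) :
    (inner ℂ (eigB A j) (opN A v) : ℂ) = (eigV A j : ℂ) * inner ℂ (eigB A j) v := by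
  rw [← opN_isSymmetric A (eigB A j) v, opN_eigB, inner_smul_left, Complex.conj_ofReal]

lemma finrank_eigE_le :
    Module.finrank ℂ (eigE A i)
      ≤ (univ.filter (fun j => eigV A j = eigV A i)).card := by
  classical
  set S := univ.filter (fun j => eigV A j = eigV A i) with hS
  have hle : eigE A i ≤ Submodule.span ℂ ((S.image (eigB A)) : Set (EuclideanSpace ℂ G)) := by
    intro v hv
    have hrepr := (eigB A).sum_repr' v
    have hzero : ∀ j, j ∉ S → (inner ℂ (eigB A j) v : ℂ) = 0 := by
      intro j hj
      have h1 : (inner ℂ (eigB A j) (opN A v) : ℂ) = (eigV A j : ℂ) * inner ℂ (eigB A j) v :=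
        inner_eigB_opN A j v
      have h2 : (inner ℂ (eigB A j) (opN A v) : ℂ) = (eigV A i : ℂ) * inner ℂ (eigB A j) v := by
        rw [(mem_eigE A i v).1 hv, inner_smul_right]
      have h3 : ((eigV A j : ℂ) - (eigV A i : ℂ)) * inner ℂ (eigB A j) v = 0 := by
        rw [sub_mul, h1.symm.trans h2]; ring
      have h4 : (eigV A j : ℂ) - (eigV A i : ℂ) ≠ 0 := by
        simp only [hS, Finset.mem_filter, Finset.mem_univ, true_and] at hj
        intro hc
        exact hj (by exact_mod_cast sub_eq_zero.1 hc)
      exact (mul_eq_zero.1 h3).resolve_left h4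
    rw [← hrepr]
    refine Submodule.sum_mem _ fun j _ => ?_
    by_cases hj : j ∈ S
    · exact Submodule.smul_mem _ _ (Submodule.subset_span
        (Finset.mem_coe.2 (Finset.mem_image.2 ⟨j, hj, rfl⟩)))
    · rw [hzero j hj, zero_smul]; exact Submodule.zero_mem _
  calc Module.finrank ℂ (eigE A i)
      ≤ Module.finrank ℂ (Submodule.span ℂ ((S.image (eigB A)) : Set (EuclideanSpace ℂ G))) :=
        Submodule.finrank_mono hle
    _ ≤ (S.image (eigB A)).card := finrank_span_finset_le_card _
    _ ≤ S.card := Finset.card_image_le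

lemma eigV_mul_k_le (k : ℕ)
    (hrep : ∀ (d : ℕ) (ρ : G →* Matrix.GeneralLinearGroup (Fin d) ℂ),
      (∃ g, ρ g ≠ 1) → k ≤ d) :
    eigV A i * k ≤ (Fintype.card G) * A.card := by
  rcases le_or_gt (eigV A i) 0 with h | h
  · have : eigV A i * k ≤ 0 := mul_nonpos_of_nonpos_of_nonneg h (Nat.cast_nonneg k)
    exact this.trans (by positivity)
  · set S := univ.filter (fun j => eigV A j = eigV A i) with hS
    have hk_le : (k : ℝ) ≤ S.card := by
      have h1 : k ≤ Module.finrank ℂ (eigE A i) :=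
        hrep _ (repGL A i) (repGL_nontrivial A i h)
      exact_mod_cast h1.trans (finrank_eigE_le A i)
    calc eigV A i * k ≤ eigV A i * S.card := by
          exact mul_le_mul_of_nonneg_left hk_le h.le
      _ = ∑ j ∈ S, eigV A j := by
          rw [Finset.sum_congr rfl (fun j hj => by
            simp only [hS, Finset.mem_filter] at hj; rw [hj.2])]
          rw [Finset.sum_const, nsmul_eq_mul, mul_comm]
      _ ≤ ∑ j, eigV A j := Finset.sum_le_sum_of_subset_of_nonneg (Finset.subset_univ S)
          (fun j _ _ => eigV_nonneg A j)
      _ ≤ (Fintype.card G) * A.card := sum_eigV_le A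

/-- THE key spectral bound -/
theorem norm_convT_sq_le (k : ℕ) (hk : 0 < k)
    (hrep : ∀ (d : ℕ) (ρ : G →* Matrix.GeneralLinearGroup (Fin d) ℂ),
      (∃ g, ρ g ≠ 1) → k ≤ d)
    (f : EuclideanSpace ℂ G) (hf : ∑ x, f x = 0) :
    ‖convT A f‖ ^ 2 ≤ (Fintype.card G * A.card / k) * ‖f‖ ^ 2 := by
  have hPf : projP f = f := projP_of_sum_zero f hf
  -- key identity
  have key : (‖convT A f‖ ^ 2 : ℝ) = ∑ j, eigV A j * ‖(inner ℂ (eigB A j) f : ℂ)‖ ^ 2 := by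
    have c1 : (inner ℂ f (opN A f) : ℂ) = (‖convT A f‖ ^ 2 : ℝ) := by
      rw [inner_opN_right, hPf, @inner_self_eq_norm_sq_to_K ℂ]
      norm_cast
    have c2 : (inner ℂ f (opN A f) : ℂ)
        = ∑ j, (inner ℂ f (eigB A j) : ℂ) * inner ℂ (eigB A j) (opN A f) := by
      rw [(eigB A).sum_inner_mul_inner f (opN A f)]
    have c3 : ∀ j : Fin (Fintype.card G), (inner ℂ f (eigB A j) : ℂ) * inner ℂ (eigB A j) (opN A f)
        = ((eigV A j * ‖(inner ℂ (eigB A j) f : ℂ)‖ ^ 2 : ℝ) : ℂ) := by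
      intro j
      rw [inner_eigB_opN]
      have hcc : (inner ℂ f (eigB A j) : ℂ) = (starRingEnd ℂ) (inner ℂ (eigB A j) f) :=
        (inner_conj_symm _ _).symm
      rw [hcc, show (starRingEnd ℂ) (inner ℂ (eigB A j) f : ℂ)
            * ((eigV A j : ℂ) * (inner ℂ (eigB A j) f : ℂ))
          = (eigV A j : ℂ) * ((inner ℂ (eigB A j) f : ℂ)
            * (starRingEnd ℂ) (inner ℂ (eigB A j) f : ℂ)) from by ring,
        RCLike.mul_conj]
      rw [Complex.ofReal_mul, Complex.ofReal_pow]
      rfl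
    have := c1.symm.trans (c2.trans (Finset.sum_congr rfl fun j _ => c3 j))
    have h2 : ((‖convT A f‖ ^ 2 : ℝ) : ℂ)
        = ((∑ j, eigV A j * ‖(inner ℂ (eigB A j) f : ℂ)‖ ^ 2 : ℝ) : ℂ) := by
      rw [this]; push_cast; ring_nf
    exact_mod_cast h2
  rw [key]
  calc ∑ j, eigV A j * ‖(inner ℂ (eigB A j) f : ℂ)‖ ^ 2
      ≤ ∑ j, (Fintype.card G * A.card / k) * ‖(inner ℂ (eigB A j) f : ℂ)‖ ^ 2 := by
        refine Finset.sum_le_sum fun j _ => ?_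
        refine mul_le_mul_of_nonneg_right ?_ (by positivity)
        have h1 := eigV_mul_k_le A j k hrep
        exact (le_div_iff₀ (by exact_mod_cast hk)).2 h1
    _ = (Fintype.card G * A.card / k) * ‖f‖ ^ 2 := by
        rw [← Finset.mul_sum, parseval]

end Mult

-- ===== from part6.lean =====

variable {G : Type} [Group G] [Fintype G] [DecidableEq G]

/-- the count of y ∈ B with x * y⁻¹ ∈ A -/
noncomputable def cnt (A B : Finset G) (x : G) : ℕ := (B.filter (fun y => x * y⁻¹ ∈ A)).card

theorem mix (A B : Finset G) (k : ℕ) (hk : 0 < k)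
    (hrep : ∀ (d : ℕ) (ρ : G →* Matrix.GeneralLinearGroup (Fin d) ℂ),
      (∃ g, ρ g ≠ 1) → k ≤ d) :
    ∑ x : G, ((cnt A B x : ℝ) - A.card * B.card / Fintype.card G) ^ 2
      ≤ (Fintype.card G * A.card / k) * B.card := by
  have hn : (0 : ℝ) < Fintype.card G := by exact_mod_cast Fintype.card_pos
  set n : ℝ := (Fintype.card G : ℝ) with hndef
  -- the test function
  set f : EuclideanSpace ℂ G :=
    WithLp.toLp 2 (fun y => (((if y ∈ B then (1:ℝ) else 0) - B.card / n : ℝ) : ℂ)) with hfdef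
  have h0 : ∑ x : G, ((if x ∈ B then (1:ℝ) else 0) - B.card / n) = 0 := by
    rw [Finset.sum_sub_distrib, Finset.sum_ite_mem, Finset.univ_inter]
    simp only [Finset.sum_const, Finset.card_univ, nsmul_eq_mul, mul_one]
    have hne : n ≠ 0 := ne_of_gt hn
    field_simp
    rw [hndef]; ring
  have hsum : ∑ x, f x = 0 := by
    simp only [hfdef]
    rw [← Complex.ofReal_sum, h0, Complex.ofReal_zero]
  -- value of convT A f
  have happ : ∀ x : G, convT A f x = (((cnt A B x : ℝ) - A.card * B.card / n : ℝ) : ℂ) := by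
    intro x
    rw [convT_apply]
    have hsplit : ∀ y : G, (if x * y⁻¹ ∈ A then f y else 0)
        = (if x * y⁻¹ ∈ A ∧ y ∈ B then (1:ℂ) else 0)
          - (if x * y⁻¹ ∈ A then ((B.card / n : ℝ) : ℂ) else 0) := by
      intro y
      simp only [hfdef]
      by_cases h1 : x * y⁻¹ ∈ A <;> by_cases h2 : y ∈ B <;> simp [h1, h2]
    rw [Finset.sum_congr rfl fun y _ => hsplit y, Finset.sum_sub_distrib]
    have e1 : (∑ y : G, if x * y⁻¹ ∈ A ∧ y ∈ B then (1:ℂ) else 0) = (cnt A B x : ℂ) := by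
      rw [Finset.sum_boole]
      unfold cnt
      congr 2
      ext y
      simp [and_comm]
    have e2 : (∑ y : G, if x * y⁻¹ ∈ A then ((B.card / n : ℝ) : ℂ) else 0)
        = (A.card : ℂ) * ((B.card / n : ℝ) : ℂ) := by
      rw [show (∑ y : G, if x * y⁻¹ ∈ A then ((B.card / n : ℝ) : ℂ) else 0)
          = ∑ z : G, (if z ∈ A then ((B.card / n : ℝ) : ℂ) else 0) from
        Fintype.sum_equiv ((Equiv.inv G).trans (Equiv.mulLeft x)) _ _ (fun y => rfl)]
      rw [Finset.sum_ite_mem, Finset.univ_inter, Finset.sum_const, nsmul_eq_mul]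
    rw [e1, e2]
    push_cast
    ring
  -- norm of f is at most sqrt |B|
  have hnormf : ‖f‖ ^ 2 ≤ (B.card : ℝ) := by
    rw [norm_sq_eq]
    have hterm : ∀ y : G, ‖f y‖ ^ 2 = ((if y ∈ B then (1:ℝ) else 0) - B.card / n) ^ 2 := by
      intro y
      simp only [hfdef, Complex.norm_real]
      exact sq_abs _
    rw [Finset.sum_congr rfl fun y _ => hterm y]
    have expand : ∀ y : G, ((if y ∈ B then (1:ℝ) else 0) - B.card / n) ^ 2
        = (if y ∈ B then (1:ℝ) else 0) - 2 * (B.card / n) * (if y ∈ B then (1:ℝ) else 0)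
          + (B.card / n) ^ 2 := by
      intro y; split <;> ring
    rw [Finset.sum_congr rfl fun y _ => expand y]
    rw [Finset.sum_add_distrib, Finset.sum_sub_distrib, ← Finset.mul_sum]
    simp only [Finset.sum_ite_mem, Finset.univ_inter, Finset.sum_const, Finset.card_univ,
      nsmul_eq_mul, smul_eq_mul, mul_one]
    have h1 : (Fintype.card G : ℝ) * ((B.card:ℝ) / n) ^ 2 = (B.card : ℝ)^2 / n := by
      rw [← hndef]; field_simp
    have h2 : 2 * ((B.card:ℝ)/n) * B.card = 2 * ((B.card:ℝ)^2/n) := by field_simp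
    have h3 : (0:ℝ) ≤ (B.card:ℝ)^2 / n := div_nonneg (sq_nonneg _) hn.le
    linarith
  -- combine
  have hbound := norm_convT_sq_le A k hk hrep f hsum
  have hlhs : ∑ x : G, ((cnt A B x : ℝ) - A.card * B.card / n) ^ 2 = ‖convT A f‖ ^ 2 := by
    rw [norm_sq_eq]
    refine Finset.sum_congr rfl fun x _ => ?_
    rw [happ x, Complex.norm_real]
    exact (sq_abs _).symm
  rw [hlhs]
  refine hbound.trans ?_
  have hcoef : (0:ℝ) ≤ n * A.card / k := by positivity
  exact mul_le_mul_of_nonneg_left hnormf hcoef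


-- ===== from part7.lean =====

variable {G : Type} [Group G] [Fintype G] [DecidableEq G]


theorem chebyshev (A B : Finset G) (k : ℕ) (hk : 0 < k)
    (hrep : ∀ (d : ℕ) (ρ : G →* Matrix.GeneralLinearGroup (Fin d) ℂ),
      (∃ g, ρ g ≠ 1) → k ≤ d)
    (t : ℝ) (ht : 0 < t)
    (hmean : (A.card : ℝ) * B.card / Fintype.card G = 2 * t) :
    ((univ.filter (fun x : G => (cnt A B x : ℝ) < t)).card : ℝ) * t ^ 2
      ≤ (Fintype.card G * A.card / k) * B.card := by
  set S := univ.filter (fun x : G => (cnt A B x : ℝ) < t) with hS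
  have key : ∀ x ∈ S, t ^ 2 ≤ ((cnt A B x : ℝ) - A.card * B.card / Fintype.card G) ^ 2 := by
    intro x hx
    rw [Finset.mem_filter] at hx
    have h1 : (cnt A B x : ℝ) < t := hx.2
    have h2 : (0:ℝ) ≤ cnt A B x := Nat.cast_nonneg _
    rw [hmean]
    nlinarith
  calc ((S.card : ℝ)) * t ^ 2 = ∑ _x ∈ S, t ^ 2 := by
        rw [Finset.sum_const, nsmul_eq_mul]
    _ ≤ ∑ x ∈ S, ((cnt A B x : ℝ) - A.card * B.card / Fintype.card G) ^ 2 :=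
        Finset.sum_le_sum key
    _ ≤ ∑ x : G, ((cnt A B x : ℝ) - A.card * B.card / Fintype.card G) ^ 2 :=
        Finset.sum_le_sum_of_subset_of_nonneg (Finset.subset_univ S)
          (fun x _ _ => sq_nonneg _)
    _ ≤ (Fintype.card G * A.card / k) * B.card := mix A B k hk hrep

lemma mem_image_inv (S : Finset G) (a : G) : a ∈ S.image (·⁻¹) ↔ a⁻¹ ∈ S := by
  simp only [Finset.mem_image]
  constructor
  · rintro ⟨b, hb, rfl⟩; simpa using hb
  · intro h; exact ⟨a⁻¹, h, inv_inv a⟩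

lemma card_filter_inv (p : G → Prop) [DecidablePred p] :
    (univ.filter (fun x : G => p x⁻¹)).card = (univ.filter p).card := by
  refine Finset.card_bij' (fun a _ => a⁻¹) (fun a _ => a⁻¹) ?_ ?_ ?_ ?_
  · intro a ha; rw [Finset.mem_filter] at ha ⊢; exact ⟨Finset.mem_univ _, ha.2⟩
  · intro a ha; rw [Finset.mem_filter] at ha ⊢
    exact ⟨Finset.mem_univ _, by simpa using ha.2⟩
  · intro a _; exact inv_inv a
  · intro a _; exact inv_inv a


-- ===== from part8.lean =====

variable {G : Type} [Group G] [Fintype G] [DecidableEq G]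


lemma pos3 {a b c : ℝ} (ha : 0 ≤ a) (hb : 0 ≤ b) (hc : 0 ≤ c) (h : 0 < a * b * c) :
    0 < a ∧ 0 < b ∧ 0 < c := by
  refine ⟨?_, ?_, ?_⟩
  · rcases ha.lt_or_eq with h' | h'
    · exact h'
    · exfalso; rw [← h'] at h; simp at h
  · rcases hb.lt_or_eq with h' | h'
    · exact h'
    · exfalso; rw [← h'] at h; simp at h
  · rcases hc.lt_or_eq with h' | h'
    · exact h'
    · exfalso; rw [← h'] at h; simp at h

/-- a bad-set bound specialized for our application -/
lemma bad_card_le (A B : Finset G) (k : ℕ) (hk : 0 < k)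
    (hrep : ∀ (d : ℕ) (ρ : G →* Matrix.GeneralLinearGroup (Fin d) ℂ),
      (∃ g, ρ g ≠ 1) → k ≤ d)
    (pa pb q : ℝ) (hpa : 0 < pa) (hpb : 0 < pb) (hq : 0 < q)
    (hA : (A.card : ℝ) = pa * Fintype.card G) (hB : (B.card : ℝ) = pb * Fintype.card G)
    (hcond : 16 / (k:ℝ) ≤ q * pa * pb) :
    ((univ.filter (fun x : G =>
        (cnt A B x : ℝ) < pa * pb * Fintype.card G / 2)).card : ℝ)
      ≤ q * Fintype.card G / 4 := by
  have hnpos : (0:ℝ) < Fintype.card G := by exact_mod_cast Fintype.card_pos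
  have hkpos : (0:ℝ) < k := by exact_mod_cast hk
  set n : ℝ := (Fintype.card G : ℝ) with hndef
  set t : ℝ := pa * pb * n / 2 with htdef
  have ht : 0 < t := by positivity
  have hmean : (A.card : ℝ) * B.card / n = 2 * t := by
    rw [hA, hB, htdef]
    field_simp
  have hcheb := chebyshev A B k hk hrep t ht hmean
  rw [hA, hB] at hcheb
  -- n * (pa * n) / k * (pb * n)  ≤  (q * n / 4) * t ^ 2
  have hc' : 16 ≤ q * pa * pb * k := by
    rw [div_le_iff₀ hkpos] at hcond
    linarith
  have hstep : n * (pa * n) / k * (pb * n) ≤ (q * n / 4) * t ^ 2 := by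
    rw [div_mul_eq_mul_div, div_mul_eq_mul_div, div_le_iff₀ hkpos, htdef]
    have hx : 0 ≤ pa * pb * n ^ 3 / 16 := by positivity
    nlinarith [mul_le_mul_of_nonneg_left hc' hx]
  have h2 : ((univ.filter (fun x : G => (cnt A B x : ℝ) < t)).card : ℝ) * t ^ 2
      ≤ (q * n / 4) * t ^ 2 := le_trans hcheb hstep
  exact le_of_mul_le_mul_right h2 (by positivity)


-- ===== from part9.lean =====

variable {G : Type} [Group G] [Fintype G] [DecidableEq G]


lemma final_step (B C D : Finset G) (k : ℕ) (hk : 0 < k)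
    (hrep : ∀ (d : ℕ) (ρ : G →* Matrix.GeneralLinearGroup (Fin d) ℂ),
      (∃ g, ρ g ≠ 1) → k ≤ d)
    (hBpos : 0 < (B.card : ℝ)) (hCpos : 0 < (C.card : ℝ)) (hDpos : 0 < (D.card : ℝ))
    (hprod : (Fintype.card G : ℝ) ^ 3 / k < (B.card : ℝ) * C.card * D.card) :
    ∃ x ∈ D, ∃ z ∈ C, x * z ∈ B := by
  have hnpos : (0:ℝ) < Fintype.card G := by exact_mod_cast Fintype.card_pos
  have hkpos : (0:ℝ) < k := by exact_mod_cast hk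
  set n : ℝ := (Fintype.card G : ℝ) with hndef
  set C' : Finset G := C.image (·⁻¹) with hC'def
  have hC'c : (C'.card : ℝ) = (C.card : ℝ) := by
    rw [hC'def, Finset.card_image_of_injective C inv_injective]
  by_contra hcon
  push_neg at hcon
  -- every count vanishes on D
  have hzero : ∀ x ∈ D, cnt B C' x = 0 := by
    intro x hx
    rw [cnt, Finset.card_eq_zero, Finset.filter_eq_empty_iff]
    intro y hy
    exact hcon x hx y⁻¹ ((mem_image_inv C y).1 hy)
  set m : ℝ := (B.card : ℝ) * C'.card / n with hmdef
  have hsumD : ∑ x ∈ D, ((cnt B C' x : ℝ) - m) ^ 2 = (D.card : ℝ) * m ^ 2 := by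
    rw [Finset.sum_congr rfl fun x hx => by rw [hzero x hx]]
    simp only [Nat.cast_zero, zero_sub, neg_sq, Finset.sum_const, nsmul_eq_mul]
  have hchain : (D.card : ℝ) * m ^ 2 ≤ (n * B.card / k) * C'.card := by
    rw [← hsumD]
    refine le_trans (Finset.sum_le_sum_of_subset_of_nonneg (Finset.subset_univ D)
      (fun x _ _ => sq_nonneg _)) ?_
    have := mix B C' k hk hrep
    rw [← hndef] at this
    rw [← hmdef] at this
    exact this
  -- contradiction with size assumption
  have hcontra : (n * B.card / k) * C'.card < (D.card : ℝ) * m ^ 2 := by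
    have h1 : (n ^ 3 / k) * ((B.card : ℝ) * C.card / n ^ 2)
        < ((B.card : ℝ) * C.card * D.card) * ((B.card : ℝ) * C.card / n ^ 2) := by
      refine mul_lt_mul_of_pos_right hprod ?_
      positivity
    have h2 : (n ^ 3 / k) * ((B.card : ℝ) * C.card / n ^ 2) = (n * B.card / k) * C.card := by
      field_simp
    have h3 : ((B.card : ℝ) * C.card * D.card) * ((B.card : ℝ) * C.card / n ^ 2)
        = (D.card : ℝ) * ((B.card : ℝ) * C.card / n) ^ 2 := by
      field_simp
    rw [h2, h3] at h1
    rw [hmdef, hC'c]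
    exact h1
  have := lt_of_le_of_lt hchain hcontra
  exact lt_irrefl _ this


end GowersAux

open GowersAux Finset in
set_option maxHeartbeats 1000000 in
/-- Theorem 5.7 (Gowers, Quasirandom Groups): if every nontrivial complex
representation of a finite group `G` of order `n` has dimension at least `k`,
and `A₁, A₂, A₃, A₁₂, A₁₃, A₂₃, A₁₂₃ ⊆ G` have densities `p₁, …, p₁₂₃` with
`p₁p₂p₁₂`, `p₁p₃p₁₃`, `p₁p₂₃p₁₂₃`, `p₂p₃p₂₃p₁₂p₁₃p₁₂₃` all at least `16/k`, then
there exist `x₁ ∈ A₁`, `x₂ ∈ A₂`, `x₃ ∈ A₃` with `x₁x₂ ∈ A₁₂`, `x₃x₁ ∈ A₁₃`,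
`x₂x₃⁻¹ ∈ A₂₃` and `x₂x₃⁻¹x₁⁻¹ ∈ A₁₂₃`. -/
theorem simultaneous_mixed_products_three_variables
    (G : Type) [Group G] [Fintype G] (k : ℕ) (hk0 : 0 < k)
    (hrep : ∀ (d : ℕ) (ρ : G →* Matrix.GeneralLinearGroup (Fin d) ℂ),
      (∃ g, ρ g ≠ 1) → k ≤ d)
    (A1 A2 A3 A12 A13 A23 A123 : Finset G)
    (p1 p2 p3 p12 p13 p23 p123 : ℝ)
    (h1 : (A1.card : ℝ) = p1 * Fintype.card G)
    (h2 : (A2.card : ℝ) = p2 * Fintype.card G)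
    (h3 : (A3.card : ℝ) = p3 * Fintype.card G)
    (h12 : (A12.card : ℝ) = p12 * Fintype.card G)
    (h13 : (A13.card : ℝ) = p13 * Fintype.card G)
    (h23 : (A23.card : ℝ) = p23 * Fintype.card G)
    (h123 : (A123.card : ℝ) = p123 * Fintype.card G)
    (hc1 : 16 / (k : ℝ) ≤ p1 * p2 * p12)
    (hc2 : 16 / (k : ℝ) ≤ p1 * p3 * p13)
    (hc3 : 16 / (k : ℝ) ≤ p1 * p23 * p123)
    (hc4 : 16 / (k : ℝ) ≤ p2 * p3 * p23 * p12 * p13 * p123) :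
    ∃ x1 ∈ A1, ∃ x2 ∈ A2, ∃ x3 ∈ A3,
      x1 * x2 ∈ A12 ∧ x3 * x1 ∈ A13 ∧ x2 * x3⁻¹ ∈ A23 ∧ x2 * x3⁻¹ * x1⁻¹ ∈ A123 := by
  classical
  have hnpos : (0:ℝ) < Fintype.card G := by exact_mod_cast Fintype.card_pos
  have hkpos : (0:ℝ) < k := by exact_mod_cast hk0
  have h16k : (0:ℝ) < 16 / k := by positivity
  -- nonnegativity of densities
  have hnn : ∀ (c : ℕ) (p : ℝ), (c:ℝ) = p * Fintype.card G → 0 ≤ p := by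
    intro c p h
    have h0 : (0:ℝ) * Fintype.card G ≤ p * Fintype.card G := by
      rw [zero_mul, ← h]; exact Nat.cast_nonneg c
    exact le_of_mul_le_mul_right h0 hnpos
  have hp1n := hnn _ _ h1; have hp2n := hnn _ _ h2; have hp3n := hnn _ _ h3
  have hp12n := hnn _ _ h12; have hp13n := hnn _ _ h13
  have hp23n := hnn _ _ h23; have hp123n := hnn _ _ h123
  -- positivity of densities
  obtain ⟨hp1, hp2, hp12⟩ := pos3 hp1n hp2n hp12n (lt_of_lt_of_le h16k hc1)
  obtain ⟨-, hp3, hp13⟩ := pos3 hp1n hp3n hp13n (lt_of_lt_of_le h16k hc2)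
  obtain ⟨-, hp23, hp123⟩ := pos3 hp1n hp23n hp123n (lt_of_lt_of_le h16k hc3)
  -- the inverted sets
  set A2' : Finset G := A2.image (·⁻¹) with hA2'def
  set A13' : Finset G := A13.image (·⁻¹) with hA13'def
  set A123' : Finset G := A123.image (·⁻¹) with hA123'def
  have hA2'c : (A2'.card : ℝ) = p2 * Fintype.card G := by
    rw [hA2'def, Finset.card_image_of_injective A2 inv_injective]; exact h2
  have hA13'c : (A13'.card : ℝ) = p13 * Fintype.card G := by
    rw [hA13'def, Finset.card_image_of_injective A13 inv_injective]; exact h13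
  have hA123'c : (A123'.card : ℝ) = p123 * Fintype.card G := by
    rw [hA123'def, Finset.card_image_of_injective A123 inv_injective]; exact h123
  -- the three bad sets
  set Bad1 : Finset G := univ.filter (fun x : G =>
    (cnt A12 A2' x : ℝ) < p12 * p2 * Fintype.card G / 2) with hBad1def
  set Bad2 : Finset G := univ.filter (fun x : G =>
    (cnt A13' A3 x⁻¹ : ℝ) < p13 * p3 * Fintype.card G / 2) with hBad2def
  set Bad3 : Finset G := univ.filter (fun x : G =>
    (cnt A123' A23 x : ℝ) < p123 * p23 * Fintype.card G / 2) with hBad3def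
  have hB1 : (Bad1.card : ℝ) ≤ p1 * Fintype.card G / 4 :=
    bad_card_le A12 A2' k hk0 hrep p12 p2 p1 hp12 hp2 hp1 h12 hA2'c
      (by rw [show p1 * p12 * p2 = p1 * p2 * p12 from by ring]; exact hc1)
  have hB2 : (Bad2.card : ℝ) ≤ p1 * Fintype.card G / 4 := by
    have hcard : Bad2.card = (univ.filter (fun x : G =>
        (cnt A13' A3 x : ℝ) < p13 * p3 * Fintype.card G / 2)).card := by
      rw [hBad2def]
      exact card_filter_inv (fun x => (cnt A13' A3 x : ℝ) < p13 * p3 * Fintype.card G / 2)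
    rw [hcard]
    exact bad_card_le A13' A3 k hk0 hrep p13 p3 p1 hp13 hp3 hp1 hA13'c h3
      (by rw [show p1 * p13 * p3 = p1 * p3 * p13 from by ring]; exact hc2)
  have hB3 : (Bad3.card : ℝ) ≤ p1 * Fintype.card G / 4 :=
    bad_card_le A123' A23 k hk0 hrep p123 p23 p1 hp123 hp23 hp1 hA123'c h23
      (by rw [show p1 * p123 * p23 = p1 * p23 * p123 from by ring]; exact hc3)
  -- a good point x1 exists
  have hunion : ((Bad1 ∪ Bad2 ∪ Bad3).card : ℝ) < A1.card := by
    have hc : ((Bad1 ∪ Bad2 ∪ Bad3).card : ℕ) ≤ Bad1.card + Bad2.card + Bad3.card :=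
      le_trans (Finset.card_union_le _ _) (by
        have := Finset.card_union_le Bad1 Bad2
        omega)
    have hcR : ((Bad1 ∪ Bad2 ∪ Bad3).card : ℝ) ≤ (Bad1.card : ℝ) + Bad2.card + Bad3.card := by
      exact_mod_cast hc
    rw [h1]
    have hpn : 0 < p1 * (Fintype.card G : ℝ) := by positivity
    linarith
  have hnotsub : ¬ A1 ⊆ (Bad1 ∪ Bad2 ∪ Bad3) := by
    intro hsub
    have := Finset.card_le_card hsub
    have : (A1.card : ℝ) ≤ ((Bad1 ∪ Bad2 ∪ Bad3).card : ℝ) := by exact_mod_cast this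
    linarith
  obtain ⟨x1, hx1A1, hx1good⟩ := Finset.not_subset.1 hnotsub
  simp only [Finset.mem_union, not_or] at hx1good
  obtain ⟨⟨hg1, hg2⟩, hg3⟩ := hx1good
  rw [hBad1def, Finset.mem_filter] at hg1
  rw [hBad2def, Finset.mem_filter] at hg2
  rw [hBad3def, Finset.mem_filter] at hg3
  push_neg at hg1 hg2 hg3
  have hg1' := hg1 (Finset.mem_univ x1)
  have hg2' := hg2 (Finset.mem_univ x1)
  have hg3' := hg3 (Finset.mem_univ x1)
  -- the slice sets
  set B : Finset G := A2.filter (fun y => x1 * y ∈ A12) with hBdef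
  set C : Finset G := A3.filter (fun z => z * x1 ∈ A13) with hCdef
  set D : Finset G := A23.filter (fun y => y * x1⁻¹ ∈ A123) with hDdef
  have hBc : cnt A12 A2' x1 = B.card := by
    rw [cnt]
    refine Finset.card_bij' (fun y _ => y⁻¹) (fun z _ => z⁻¹) ?_ ?_ ?_ ?_
    · intro y hy
      rw [Finset.mem_filter] at hy
      rw [hBdef, Finset.mem_filter]
      exact ⟨(mem_image_inv A2 y).1 hy.1, hy.2⟩
    · intro z hz
      rw [hBdef, Finset.mem_filter] at hz
      rw [Finset.mem_filter]
      refine ⟨(mem_image_inv A2 z⁻¹).2 (by simpa using hz.1), by simpa using hz.2⟩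
    · intro y _; exact inv_inv y
    · intro z _; exact inv_inv z
  have hCc : cnt A13' A3 x1⁻¹ = C.card := by
    rw [cnt, hCdef]
    congr 1
    apply Finset.filter_congr
    intro y _
    rw [hA13'def, mem_image_inv, mul_inv_rev, inv_inv, inv_inv]
  have hDc : cnt A123' A23 x1 = D.card := by
    rw [cnt, hDdef]
    congr 1
    apply Finset.filter_congr
    intro y _
    rw [hA123'def, mem_image_inv, mul_inv_rev, inv_inv]
  -- lower bounds for slice sizes
  have hBlb : p12 * p2 * Fintype.card G / 2 ≤ (B.card : ℝ) := by
    rw [← hBc]; exact hg1'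
  have hClb : p13 * p3 * Fintype.card G / 2 ≤ (C.card : ℝ) := by
    rw [← hCc]; exact hg2'
  have hDlb : p123 * p23 * Fintype.card G / 2 ≤ (D.card : ℝ) := by
    rw [← hDc]; exact hg3'
  have hBpos : 0 < (B.card : ℝ) := lt_of_lt_of_le (by positivity) hBlb
  have hCpos : 0 < (C.card : ℝ) := lt_of_lt_of_le (by positivity) hClb
  have hDpos : 0 < (D.card : ℝ) := lt_of_lt_of_le (by positivity) hDlb
  -- size condition for the final application
  have hprod : (Fintype.card G : ℝ) ^ 3 / k < (B.card : ℝ) * C.card * D.card := by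
    have hc4' : 16 ≤ p2 * p3 * p23 * p12 * p13 * p123 * k := by
      rw [div_le_iff₀ hkpos] at hc4; linarith
    have hlow : (p12 * p2 * Fintype.card G / 2) * (p13 * p3 * Fintype.card G / 2)
        * (p123 * p23 * Fintype.card G / 2) ≤ (B.card : ℝ) * C.card * D.card := by
      refine mul_le_mul (mul_le_mul hBlb hClb (by positivity) (by positivity)) hDlb
        (by positivity) (by positivity)
    have heq : (p12 * p2 * Fintype.card G / 2) * (p13 * p3 * Fintype.card G / 2)
        * (p123 * p23 * Fintype.card G / 2)
        = (p2 * p3 * p23 * p12 * p13 * p123) * (Fintype.card G : ℝ) ^ 3 / 8 := by ring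
    have hge : 2 * (Fintype.card G : ℝ) ^ 3 / k
        ≤ (p2 * p3 * p23 * p12 * p13 * p123) * (Fintype.card G : ℝ) ^ 3 / 8 := by
      rw [div_le_div_iff₀ hkpos (by norm_num : (0:ℝ) < 8)]
      linarith [mul_le_mul_of_nonneg_left hc4' (le_of_lt (pow_pos hnpos 3))]
    have hfin : (Fintype.card G : ℝ) ^ 3 / k < 2 * (Fintype.card G : ℝ) ^ 3 / k := by
      have : 0 < (Fintype.card G : ℝ) ^ 3 / k := by positivity
      calc (Fintype.card G : ℝ) ^ 3 / k < 2 * ((Fintype.card G : ℝ) ^ 3 / k) := by linarith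
        _ = 2 * (Fintype.card G : ℝ) ^ 3 / k := by ring
    calc (Fintype.card G : ℝ) ^ 3 / k < 2 * (Fintype.card G : ℝ) ^ 3 / k := hfin
      _ ≤ (p2 * p3 * p23 * p12 * p13 * p123) * (Fintype.card G : ℝ) ^ 3 / 8 := hge
      _ = (p12 * p2 * Fintype.card G / 2) * (p13 * p3 * Fintype.card G / 2)
          * (p123 * p23 * Fintype.card G / 2) := heq.symm
      _ ≤ (B.card : ℝ) * C.card * D.card := hlow
  obtain ⟨x, hxD, x3, hx3C, hxB⟩ := final_step B C D k hk0 hrep hBpos hCpos hDpos hprod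
  -- unpack memberships
  rw [hDdef, Finset.mem_filter] at hxD
  rw [hCdef, Finset.mem_filter] at hx3C
  rw [hBdef, Finset.mem_filter] at hxB
  refine ⟨x1, hx1A1, x * x3, hxB.1, x3, hx3C.1, hxB.2, hx3C.2, ?_, ?_⟩
  · rw [mul_inv_cancel_right]
    exact hxD.1
  · rw [mul_inv_cancel_right]
    exact hxD.2
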